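/- In the James tree space JT, for any σ ∈ 2^ω and k ∈ ℕ, the map f_σ^k: [ℕ]^k → B ⊆ JT* given by f_σ^k(n) = (1/√k)·Σ_{i=1}^k Σ_{s ≤ σ|_{n_i}} e*_s is 1-Lipschitz with respect to the interlacing metric d_K on [ℕ]^k. -/

import Mathlib

open Filter Finset

/-- The interlacing graph distance: `d_K(n,m) = sup { | |n ∩ S| - |m ∩ S| | : S a segment of ℕ }`. -/
noncomputable def dseg (n m : Finset ℕ) : ℕ :=
  ⨆ a : ℕ, ⨆ b : ℕ,
    (((n ∩ Finset.Icc a b).card : ℤ) - ((m ∩ Finset.Icc a b).card : ℤ)).natAbs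

/-- A segment of the dyadic tree `T = 2^{<ω}`. -/
def IsSeg (S : Finset (List Bool)) : Prop :=
  ∃ t t' : List Bool, t <+: t' ∧ ∀ s : List Bool, s ∈ S ↔ (t <+: s ∧ s <+: t')

/-- The set of values `(Σ_i (Σ_{s ∈ S_i} x(s))²)^{1/2}` over finite collections of pairwise
disjoint segments of `T`. -/
noncomputable def JTset (x : List Bool → ℝ) : Set ℝ :=
  {v : ℝ | ∃ (n : ℕ) (S : Fin n → Finset (List Bool)),
    (∀ i, IsSeg (S i)) ∧ (∀ i j, i ≠ j → Disjoint (S i) (S j)) ∧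
    v = Real.sqrt (∑ i, (∑ s ∈ S i, x s) ^ 2)}

/-- The James tree norm. -/
noncomputable def JTnorm (x : List Bool → ℝ) : ℝ := sSup (JTset x)

/-- Membership in the James tree space `JT`. -/
def MemJT (x : List Bool → ℝ) : Prop := BddAbove (JTset x)

/-- `σ|_l`, the initial segment of length `l` of a branch `σ ∈ 2^ω`. -/
def trunc (σ : ℕ → Bool) (l : ℕ) : List Bool := List.ofFn (fun j : Fin l => σ j)

/-- The value at `x ∈ JT` of the functional `f_σ^k(n) - f_σ^k(m) ∈ B ⊆ JT*`, where
`f_σ^k(n) = (1/√k)·Σ_{i=1}^k Σ_{s ≤ σ|_{n_i}} e*_s`: its coefficient at `s = σ|_l` is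
`(1/√k)·(#{i : l ≤ n_i} - #{i : l ≤ m_i})`, and it vanishes elsewhere.  `R` is any bound
on the elements of `n ∪ m`. -/
noncomputable def pairDiff (σ : ℕ → Bool) (k : ℕ) (n m : Finset ℕ) (R : ℕ)
    (x : List Bool → ℝ) : ℝ :=
  (1 / Real.sqrt k) * ∑ l ∈ Finset.range (R + 1),
    (((n.filter (fun a => l ≤ a)).card : ℝ) - ((m.filter (fun a => l ≤ a)).card : ℝ)) *
      x (trunc σ l)

lemma trunc_length (σ : ℕ → Bool) (l : ℕ) : (trunc σ l).length = l := by
  simp [trunc]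

lemma take_trunc (σ : ℕ → Bool) (i j : ℕ) : (trunc σ j).take i = trunc σ (min i j) := by
  apply List.ext_getElem
  · simp [trunc]
  · intro l h1 h2
    simp [trunc]

lemma trunc_prefix (σ : ℕ → Bool) {i j : ℕ} (h : i ≤ j) : trunc σ i <+: trunc σ j := by
  have := List.take_prefix i (trunc σ j)
  rwa [take_trunc, min_eq_left h] at this

lemma prefix_trunc (σ : ℕ → Bool) {s : List Bool} {j : ℕ} (h : s <+: trunc σ j) :
    s = trunc σ s.length ∧ s.length ≤ j := by
  have hl : s.length ≤ j := by
    have := h.length_le; rwa [trunc_length] at this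
  constructor
  · rw [List.prefix_iff_eq_take] at h
    rw [take_trunc, min_eq_left hl] at h; exact h
  · exact hl

lemma trunc_injective (σ : ℕ → Bool) : Function.Injective (trunc σ) := by
  intro i j h
  have := congrArg List.length h
  simpa [trunc_length] using this

lemma isSeg_image (σ : ℕ → Bool) {a b : ℕ} (hab : a ≤ b) :
    ∃ t t' : List Bool, t <+: t' ∧
      ∀ s : List Bool, s ∈ (Finset.Icc a b).image (trunc σ) ↔ (t <+: s ∧ s <+: t') := by
  refine ⟨trunc σ a, trunc σ b, trunc_prefix σ hab, fun s => ?_⟩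
  simp only [Finset.mem_image, Finset.mem_Icc]
  constructor
  · rintro ⟨l, ⟨hal, hlb⟩, rfl⟩
    exact ⟨trunc_prefix σ hal, trunc_prefix σ hlb⟩
  · rintro ⟨h1, h2⟩
    obtain ⟨hs, hsb⟩ := prefix_trunc σ h2
    have ha : a ≤ s.length := by
      have := h1.length_le; rwa [trunc_length] at this
    exact ⟨s.length, ⟨ha, hsb⟩, hs.symm⟩

lemma runs_aux : ∀ (N : ℕ) (F : Finset ℕ), F.card ≤ N → ∃ I : Finset (ℕ × ℕ),
    (∀ p ∈ I, p.1 ≤ p.2) ∧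
    (∀ p ∈ I, (p.1 = 0 ∨ p.1 - 1 ∉ F) ∧ p.2 + 1 ∉ F) ∧
    F = I.biUnion (fun p => Finset.Icc p.1 p.2) ∧
    (∀ p ∈ I, ∀ q ∈ I, p ≠ q → Disjoint (Finset.Icc p.1 p.2) (Finset.Icc q.1 q.2)) := by
  intro N
  induction N with
  | zero =>
    intro F hF
    have : F = ∅ := Finset.card_eq_zero.mp (Nat.le_zero.mp hF)
    subst this
    exact ⟨∅, by simp, by simp, by simp, by simp⟩
  | succ N ih =>
    intro F hF
    rcases F.eq_empty_or_nonempty with rfl | hne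
    · exact ⟨∅, by simp, by simp, by simp, by simp⟩
    set b := F.max' hne with hb
    have hbF : b ∈ F := F.max'_mem hne
    have hP : ∃ a, Finset.Icc a b ⊆ F := ⟨b, by simp [hbF]⟩
    set a := Nat.find hP with ha
    have haIcc : Finset.Icc a b ⊆ F := Nat.find_spec hP
    have hab : a ≤ b := Nat.find_le (by simp [hbF])
    have haF : a ∈ F := haIcc (by simp [hab])
    have ha1 : a = 0 ∨ a - 1 ∉ F := by
      rcases Nat.eq_zero_or_pos a with h0 | h0
      · exact Or.inl h0
      · right
        intro hcon
        have : Finset.Icc (a - 1) b ⊆ F := by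
          intro e he
          simp only [Finset.mem_Icc] at he
          rcases Nat.lt_or_ge e a with h | h
          · have : e = a - 1 := by omega
            rwa [this]
          · exact haIcc (Finset.mem_Icc.mpr ⟨h, he.2⟩)
        have := Nat.find_min' hP this
        omega
    have hb1 : b + 1 ∉ F := fun hcon => by
      have := F.le_max' _ hcon; omega
    set F' := F \ Finset.Icc a b with hF'
    have hFlt : ∀ e ∈ F', e + 1 < a := by
      intro e he
      rw [hF', Finset.mem_sdiff, Finset.mem_Icc] at he
      have heb : e ≤ b := F.le_max' _ he.1
      have hea : e < a := by omega
      have : e ≠ a - 1 := by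
        intro hcon
        rcases ha1 with h0 | h0
        · omega
        · exact h0 (hcon ▸ he.1)
      omega
    have hcard : F'.card ≤ N := by
      have : F' ⊂ F := Finset.sdiff_ssubset (by intro e he; exact haIcc he) ⟨a, by simp [hab]⟩
      have := Finset.card_lt_card this
      omega
    obtain ⟨I', h1, h2, h3, h4⟩ := ih F' hcard
    have hmemI' : ∀ p ∈ I', ∀ e ∈ Finset.Icc p.1 p.2, e ∈ F' := by
      intro p hp e he
      rw [h3]
      exact Finset.mem_biUnion.mpr ⟨p, hp, he⟩
    have habI' : (a, b) ∉ I' := by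
      intro hcon
      have := hmemI' _ hcon a (by simp [hab])
      have := hFlt a this
      omega
    refine ⟨insert (a, b) I', ?_, ?_, ?_, ?_⟩
    · intro p hp
      rcases Finset.mem_insert.mp hp with rfl | hp'
      · exact hab
      · exact h1 p hp'
    · intro p hp
      rcases Finset.mem_insert.mp hp with rfl | hp'
      · exact ⟨ha1, hb1⟩
      · have hpF' : p.1 ∈ F' := hmemI' _ hp' p.1 (by simp [h1 p hp'])
        have hp2F' : p.2 ∈ F' := hmemI' _ hp' p.2 (by simp [h1 p hp'])
        have hlt1 := hFlt _ hpF'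
        have hlt2 := hFlt _ hp2F'
        obtain ⟨hA, hB⟩ := h2 p hp'
        constructor
        · rcases hA with h0 | h0
          · exact Or.inl h0
          · right
            intro hcon
            have : p.1 - 1 ∈ F' := by
              rw [hF', Finset.mem_sdiff, Finset.mem_Icc]
              exact ⟨hcon, by omega⟩
            exact h0 this
        · intro hcon
          have : p.2 + 1 ∈ F' := by
            rw [hF', Finset.mem_sdiff, Finset.mem_Icc]
            exact ⟨hcon, by omega⟩
          exact hB this
    · rw [Finset.biUnion_insert, ← h3, hF']
      rw [Finset.union_comm, Finset.sdiff_union_of_subset haIcc]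
    · intro p hp q hq hpq
      have key : ∀ r ∈ I', Disjoint (Finset.Icc a b) (Finset.Icc r.1 r.2) := by
        intro r hr
        rw [Finset.disjoint_left]
        intro e he1 he2
        have := hFlt e (hmemI' _ hr e he2)
        rw [Finset.mem_Icc] at he1
        omega
      rcases Finset.mem_insert.mp hp with rfl | hp' <;>
        rcases Finset.mem_insert.mp hq with rfl | hq'
      · exact absurd rfl hpq
      · exact key q hq'
      · exact (key p hp').symm
      · exact h4 p hp' q hq' hpq

lemma level_sum (d : ℕ) (v : ℤ) :
    ∑ h ∈ Finset.Icc 1 d, ((if (h:ℤ) ≤ v then (1:ℝ) else 0) - (if v ≤ -(h:ℤ) then 1 else 0))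
      = ((max (-(d:ℤ)) (min (d:ℤ) v) : ℤ) : ℝ) := by
  induction d with
  | zero => simp
  | succ d ih =>
    rw [Finset.sum_Icc_succ_top (by omega : 1 ≤ d + 1), ih,
      show ((d+1:ℕ):ℤ) = (d:ℤ)+1 from by push_cast; ring]
    rcases le_or_gt ((d:ℤ)+1) v with h | h
    · rw [if_pos h, if_neg (by omega),
        show (max (-((d:ℤ)+1)) (min ((d:ℤ)+1) v)) = max (-(d:ℤ)) (min (d:ℤ) v) + 1 from by omega]
      push_cast; ring
    · rcases le_or_gt v (-((d:ℤ)+1)) with h' | h'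
      · rw [if_neg (by omega), if_pos (by omega),
          show (max (-((d:ℤ)+1)) (min ((d:ℤ)+1) v)) = max (-(d:ℤ)) (min (d:ℤ) v) - 1 from by omega]
        push_cast; ring
      · rw [if_neg (by omega), if_neg (by omega),
          show (max (-((d:ℤ)+1)) (min ((d:ℤ)+1) v)) = max (-(d:ℤ)) (min (d:ℤ) v) from by omega]
        push_cast; ring

lemma per_level (σ : ℕ → Bool) (x : List Bool → ℝ) (hx : MemJT x) (hx1 : JTnorm x ≤ 1)
    (R : ℕ) (c : ℕ → ℤ) (n m : Finset ℕ)
    (hc0 : c 0 = 0) (hcR : ∀ l, R < l → c l = 0)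
    (hjump : ∀ l, c (l+1) - c l = (if l ∈ m then 1 else 0) - (if l ∈ n then 1 else 0))
    (h : ℕ) (hh : 1 ≤ h) :
    ∃ M : Finset ℕ, M ⊆ m \ n ∧ (∀ e ∈ M, c e = (h:ℤ) - 1 ∨ c e = -(h:ℤ)) ∧
      |∑ l ∈ (Finset.range (R+1)).filter (fun l => (h:ℤ) ≤ c l), x (trunc σ l)
        - ∑ l ∈ (Finset.range (R+1)).filter (fun l => c l ≤ -(h:ℤ)), x (trunc σ l)|
        ≤ Real.sqrt (M.card) := by
  classical
  set A := (Finset.range (R+1)).filter (fun l => (h:ℤ) ≤ c l) with hA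
  set B := (Finset.range (R+1)).filter (fun l => c l ≤ -(h:ℤ)) with hB
  have hABdis : Disjoint A B := by
    rw [Finset.disjoint_left]
    intro l hl hl'
    rw [hA, Finset.mem_filter] at hl
    rw [hB, Finset.mem_filter] at hl'
    have : (1:ℤ) ≤ h := by exact_mod_cast hh
    omega
  obtain ⟨IA, hIA1, hIA2, hIA3, hIA4⟩ := runs_aux A.card A le_rfl
  obtain ⟨IB, hIB1, hIB2, hIB3, hIB4⟩ := runs_aux B.card B le_rfl
  have hIAsub : ∀ p ∈ IA, ∀ e ∈ Finset.Icc p.1 p.2, e ∈ A := by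
    intro p hp e he; rw [hIA3]; exact Finset.mem_biUnion.mpr ⟨p, hp, he⟩
  have hIBsub : ∀ p ∈ IB, ∀ e ∈ Finset.Icc p.1 p.2, e ∈ B := by
    intro p hp e he; rw [hIB3]; exact Finset.mem_biUnion.mpr ⟨p, hp, he⟩
  have hIABdis : Disjoint IA IB := by
    rw [Finset.disjoint_left]
    intro p hp hp'
    have h1 : p.1 ∈ A := hIAsub p hp p.1 (Finset.mem_Icc.mpr ⟨le_rfl, hIA1 p hp⟩)
    have h2 : p.1 ∈ B := hIBsub p hp' p.1 (Finset.mem_Icc.mpr ⟨le_rfl, hIB1 p hp'⟩)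
    exact Finset.disjoint_left.mp hABdis h1 h2
  set I := IA ∪ IB with hI
  have hIle : ∀ p ∈ I, p.1 ≤ p.2 := by
    intro p hp
    rcases Finset.mem_union.mp hp with h' | h'
    · exact hIA1 p h'
    · exact hIB1 p h'
  have hIdisj : ∀ p ∈ I, ∀ q ∈ I, p ≠ q → Disjoint (Finset.Icc p.1 p.2) (Finset.Icc q.1 q.2) := by
    intro p hp q hq hpq
    rcases Finset.mem_union.mp hp with h1 | h1 <;> rcases Finset.mem_union.mp hq with h2 | h2
    · exact hIA4 p h1 q h2 hpq
    · rw [Finset.disjoint_left]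
      intro e he1 he2
      exact Finset.disjoint_left.mp hABdis (hIAsub p h1 e he1) (hIBsub q h2 e he2)
    · rw [Finset.disjoint_left]
      intro e he1 he2
      exact Finset.disjoint_left.mp hABdis (hIAsub q h2 e he2) (hIBsub p h1 e he1)
    · exact hIB4 p h1 q h2 hpq
  -- the segment sums
  set Y : ℕ × ℕ → ℝ := fun p => ∑ l ∈ Finset.Icc p.1 p.2, x (trunc σ l) with hY
  -- rewrite the two sums
  have hsumA : ∑ l ∈ A, x (trunc σ l) = ∑ p ∈ IA, Y p := by
    rw [hIA3]
    exact Finset.sum_biUnion (fun p hp q hq hpq => hIA4 p hp q hq hpq)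
  have hsumB : ∑ l ∈ B, x (trunc σ l) = ∑ p ∈ IB, Y p := by
    rw [hIB3]
    exact Finset.sum_biUnion (fun p hp q hq hpq => hIB4 p hp q hq hpq)
  set ε : ℕ × ℕ → ℝ := fun p => if p ∈ IA then 1 else -1 with hε
  have hT : ∑ l ∈ A, x (trunc σ l) - ∑ l ∈ B, x (trunc σ l) = ∑ p ∈ I, ε p * Y p := by
    rw [hI, Finset.sum_union hIABdis, hsumA, hsumB]
    have e1 : ∑ p ∈ IA, ε p * Y p = ∑ p ∈ IA, Y p :=
      Finset.sum_congr rfl (fun p hp => by rw [hε]; simp [hp])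
    have e2 : ∑ p ∈ IB, ε p * Y p = -∑ p ∈ IB, Y p := by
      rw [← Finset.sum_neg_distrib]
      refine Finset.sum_congr rfl (fun p hp => ?_)
      have : p ∉ IA := Finset.disjoint_right.mp hIABdis hp
      rw [hε]; simp [this]
    rw [e1, e2]; ring
  -- JT norm bound: ∑_{p ∈ I} (Y p)^2 ≤ 1
  have hJT : ∑ p ∈ I, Y p ^ 2 ≤ 1 := by
    have hmem : Real.sqrt (∑ p ∈ I, Y p ^ 2) ∈ JTset x := by
      set e := I.equivFin.symm with he
      refine ⟨I.card, fun i => (Finset.Icc ((e i : ℕ × ℕ)).1 ((e i : ℕ × ℕ)).2).image (trunc σ),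
        ?_, ?_, ?_⟩
      · intro i
        exact isSeg_image σ (hIle _ (e i).2)
      · intro i j hij
        have hne : ((e i : ℕ × ℕ)) ≠ ((e j : ℕ × ℕ)) := by
          intro hcon
          exact hij (e.injective (Subtype.ext hcon))
        rw [Finset.disjoint_image (trunc_injective σ)]
        exact hIdisj _ (e i).2 _ (e j).2 hne
      · congr 1
        calc ∑ p ∈ I, Y p ^ 2 = ∑ p : {p // p ∈ I}, Y p ^ 2 :=
              (Finset.sum_coe_sort I (fun p => Y p ^ 2)).symm
          _ = ∑ i : Fin I.card, Y (e i : ℕ × ℕ) ^ 2 :=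
              (Equiv.sum_comp e (fun p => Y (p : ℕ × ℕ) ^ 2)).symm
          _ = ∑ i : Fin I.card,
              (∑ s ∈ (Finset.Icc ((e i : ℕ × ℕ)).1 ((e i : ℕ × ℕ)).2).image (trunc σ), x s) ^ 2 := by
              refine Finset.sum_congr rfl (fun i _ => ?_)
              congr 1
              rw [hY]
              rw [Finset.sum_image (fun a _ b _ hab => trunc_injective σ hab)]
    have h1 : Real.sqrt (∑ p ∈ I, Y p ^ 2) ≤ 1 := le_trans (le_csSup hx hmem) hx1
    have h2 : (0:ℝ) ≤ ∑ p ∈ I, Y p ^ 2 := Finset.sum_nonneg (fun p _ => sq_nonneg _)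
    nlinarith [Real.sq_sqrt h2, Real.sqrt_nonneg (∑ p ∈ I, Y p ^ 2)]
  -- Cauchy-Schwarz
  have hCS : |∑ p ∈ I, ε p * Y p| ≤ Real.sqrt I.card := by
    have h1 : (∑ p ∈ I, ε p * Y p) ^ 2 ≤ (∑ p ∈ I, ε p ^ 2) * ∑ p ∈ I, Y p ^ 2 :=
      Finset.sum_mul_sq_le_sq_mul_sq I ε Y
    have h2 : ∑ p ∈ I, ε p ^ 2 = I.card := by
      have hone : ∀ p ∈ I, ε p ^ 2 = 1 := fun p _ => by
        by_cases hp' : p ∈ IA <;> simp [hε, hp']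
      rw [Finset.sum_congr rfl hone, Finset.sum_const, nsmul_eq_mul, mul_one]
    have h3 : (∑ p ∈ I, ε p * Y p) ^ 2 ≤ I.card := by
      rw [h2] at h1
      calc (∑ p ∈ I, ε p * Y p) ^ 2 ≤ (I.card : ℝ) * ∑ p ∈ I, Y p ^ 2 := h1
        _ ≤ I.card * 1 := by
            apply mul_le_mul_of_nonneg_left hJT (by positivity)
        _ = I.card := mul_one _
    calc |∑ p ∈ I, ε p * Y p| = Real.sqrt ((∑ p ∈ I, ε p * Y p) ^ 2) :=
          (Real.sqrt_sq_eq_abs _).symm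
      _ ≤ Real.sqrt I.card := Real.sqrt_le_sqrt h3
  -- markers
  have hmarkA : ∀ p ∈ IA, 1 ≤ p.1 ∧ (p.1 - 1 ∈ m \ n) ∧ c (p.1 - 1) = (h:ℤ) - 1 := by
    intro p hp
    have hp1A : p.1 ∈ A := hIAsub p hp p.1 (Finset.mem_Icc.mpr ⟨le_rfl, hIA1 p hp⟩)
    rw [hA, Finset.mem_filter, Finset.mem_range] at hp1A
    have h1 : (1:ℤ) ≤ h := by exact_mod_cast hh
    have hp1pos : 1 ≤ p.1 := by
      rcases Nat.eq_zero_or_pos p.1 with h0 | h0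
      · exfalso; rw [h0] at hp1A; omega
      · exact h0
    have hnotA : p.1 - 1 ∉ A := by
      rcases (hIA2 p hp).1 with h0 | h0
      · omega
      · exact h0
    have hceh : c (p.1 - 1) < h := by
      by_contra hcon
      push_neg at hcon
      exact hnotA (by rw [hA, Finset.mem_filter, Finset.mem_range]; exact ⟨by omega, hcon⟩)
    have hj := hjump (p.1 - 1)
    rw [show p.1 - 1 + 1 = p.1 from by omega] at hj
    have hm' : p.1 - 1 ∈ m := by
      by_contra hcon
      rw [if_neg hcon] at hj
      split_ifs at hj <;> omega
    have hn' : p.1 - 1 ∉ n := by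
      intro hcon
      rw [if_pos hm', if_pos hcon] at hj
      omega
    have hce : c (p.1 - 1) = (h:ℤ) - 1 := by
      rw [if_pos hm', if_neg hn'] at hj
      omega
    exact ⟨hp1pos, Finset.mem_sdiff.mpr ⟨hm', hn'⟩, hce⟩
  have hmarkB : ∀ p ∈ IB, (p.2 ∈ m \ n) ∧ c p.2 = -(h:ℤ) := by
    intro p hp
    have hp2B : p.2 ∈ B := hIBsub p hp p.2 (Finset.mem_Icc.mpr ⟨hIB1 p hp, le_rfl⟩)
    rw [hB, Finset.mem_filter, Finset.mem_range] at hp2B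
    have h1 : (1:ℤ) ≤ h := by exact_mod_cast hh
    have hnotB : p.2 + 1 ∉ B := (hIB2 p hp).2
    have hup : -(h:ℤ) + 1 ≤ c (p.2 + 1) := by
      rcases Nat.lt_or_ge p.2 R with hlt | hge
      · by_contra hcon
        push_neg at hcon
        exact hnotB (by rw [hB, Finset.mem_filter, Finset.mem_range]; exact ⟨by omega, by omega⟩)
      · have : R < p.2 + 1 := by omega
        rw [hcR _ this]
        omega
    have hj := hjump p.2
    have hm' : p.2 ∈ m := by
      by_contra hcon
      rw [if_neg hcon] at hj
      split_ifs at hj <;> omega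
    have hn' : p.2 ∉ n := by
      intro hcon
      rw [if_pos hm', if_pos hcon] at hj
      omega
    have hce : c p.2 = -(h:ℤ) := by
      rw [if_pos hm', if_neg hn'] at hj
      omega
    exact ⟨Finset.mem_sdiff.mpr ⟨hm', hn'⟩, hce⟩
  -- the marker set
  set M : Finset ℕ := (IA.image (fun p => p.1 - 1)) ∪ (IB.image (fun p => p.2)) with hM
  have hMsub : M ⊆ m \ n := by
    intro e he
    rw [hM, Finset.mem_union] at he
    rcases he with he | he
    · obtain ⟨p, hp, rfl⟩ := Finset.mem_image.mp he
      exact (hmarkA p hp).2.1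
    · obtain ⟨p, hp, rfl⟩ := Finset.mem_image.mp he
      exact (hmarkB p hp).1
  have hMval : ∀ e ∈ M, c e = (h:ℤ) - 1 ∨ c e = -(h:ℤ) := by
    intro e he
    rw [hM, Finset.mem_union] at he
    rcases he with he | he
    · obtain ⟨p, hp, rfl⟩ := Finset.mem_image.mp he
      exact Or.inl (hmarkA p hp).2.2
    · obtain ⟨p, hp, rfl⟩ := Finset.mem_image.mp he
      exact Or.inr (hmarkB p hp).2
  have hcardM : M.card = I.card := by
    have hinjA : Set.InjOn (fun p : ℕ × ℕ => p.1 - 1) ↑IA := by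
      intro p hp q hq hpq
      simp only at hpq
      have h1 : 1 ≤ p.1 := (hmarkA p hp).1
      have h2 : 1 ≤ q.1 := (hmarkA q hq).1
      have h3 : q.1 ≤ q.2 := hIA1 q hq
      have heq : p.1 = q.1 := by omega
      by_contra hne
      have hdisj2 := hIA4 p hp q hq hne
      rw [Finset.disjoint_left] at hdisj2
      exact hdisj2 (Finset.mem_Icc.mpr ⟨le_rfl, hIA1 p hp⟩)
        (Finset.mem_Icc.mpr ⟨by omega, by omega⟩)
    have hinjB : Set.InjOn (fun p : ℕ × ℕ => p.2) ↑IB := by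
      intro p hp q hq hpq
      simp only at hpq
      have h3 : q.1 ≤ q.2 := hIB1 q hq
      by_contra hne
      have hdisj2 := hIB4 p hp q hq hne
      rw [Finset.disjoint_left] at hdisj2
      exact hdisj2 (Finset.mem_Icc.mpr ⟨hIB1 p hp, le_rfl⟩)
        (Finset.mem_Icc.mpr ⟨by omega, by omega⟩)
    have himdis : Disjoint (IA.image (fun p => p.1 - 1)) (IB.image (fun p => p.2)) := by
      rw [Finset.disjoint_left]
      intro e he1 he2
      obtain ⟨p, hp, rfl⟩ := Finset.mem_image.mp he1
      obtain ⟨q, hq, heq⟩ := Finset.mem_image.mp he2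
      have h1 : (1:ℤ) ≤ h := by exact_mod_cast hh
      have hv1 : c (p.1 - 1) = (h:ℤ) - 1 := (hmarkA p hp).2.2
      have hv2 : c q.2 = -(h:ℤ) := (hmarkB q hq).2
      rw [heq] at hv2
      omega
    rw [hM, Finset.card_union_of_disjoint himdis,
      Finset.card_image_of_injOn hinjA, Finset.card_image_of_injOn hinjB,
      hI, Finset.card_union_of_disjoint hIABdis]
  refine ⟨M, hMsub, hMval, ?_⟩
  rw [hT, hcardM]
  exact hCS

/-- For any `σ ∈ 2^ω` and `k ∈ ℕ`, the map `f_σ^k : [ℕ]^k → B ⊆ JT*`,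
`f_σ^k(n) = (1/√k)·Σ_{i=1}^k Σ_{s ≤ σ|_{n_i}} e*_s`, is `1`-Lipschitz for the interlacing
metric `d_K`: the functional `f_σ^k(n) - f_σ^k(m)` has dual norm at most `d_K(n,m)`. -/
theorem f_sigma_one_lipschitz (σ : ℕ → Bool) (k : ℕ) (hk : 1 ≤ k)
    (n m : Finset ℕ) (hn : n.card = k) (hm : m.card = k)
    (R : ℕ) (hR : ∀ a ∈ n ∪ m, a ≤ R)
    (x : List Bool → ℝ) (hx : MemJT x) (hx1 : JTnorm x ≤ 1) :
    |pairDiff σ k n m R x| ≤ (dseg n m : ℝ) := by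
  classical
  set d := dseg n m with hd
  set c : ℕ → ℤ := fun l =>
    ((n.filter (fun a => l ≤ a)).card : ℤ) - ((m.filter (fun a => l ≤ a)).card : ℤ) with hc
  have hc0 : c 0 = 0 := by
    have h1 : n.filter (fun a => 0 ≤ a) = n := Finset.filter_true_of_mem (fun a _ => Nat.zero_le a)
    have h2 : m.filter (fun a => 0 ≤ a) = m := Finset.filter_true_of_mem (fun a _ => Nat.zero_le a)
    simp [hc, h1, h2, hn, hm]
  have hcR : ∀ l, R < l → c l = 0 := by
    intro l hl
    have h1 : n.filter (fun a => l ≤ a) = ∅ := Finset.filter_eq_empty_iff.mpr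
      (fun a ha => by have := hR a (Finset.mem_union_left _ ha); omega)
    have h2 : m.filter (fun a => l ≤ a) = ∅ := Finset.filter_eq_empty_iff.mpr
      (fun a ha => by have := hR a (Finset.mem_union_right _ ha); omega)
    simp [hc, h1, h2]
  have key : ∀ (s : Finset ℕ) (l : ℕ),
      ((s.filter (fun a => l ≤ a)).card : ℤ)
        = ((s.filter (fun a => l + 1 ≤ a)).card : ℤ) + (if l ∈ s then 1 else 0) := by
    intro s l
    have hsplit : s.filter (fun a => l ≤ a)
        = (s.filter (fun a => l + 1 ≤ a)) ∪ (s.filter (fun a => a = l)) := by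
      ext a
      simp only [Finset.mem_filter, Finset.mem_union]
      constructor
      · rintro ⟨h1, h2⟩
        rcases Nat.lt_or_ge a (l+1) with h' | h'
        · exact Or.inr ⟨h1, by omega⟩
        · exact Or.inl ⟨h1, h'⟩
      · rintro (⟨h1, h2⟩ | ⟨h1, h2⟩) <;> exact ⟨h1, by omega⟩
    have hdisj : Disjoint (s.filter (fun a => l + 1 ≤ a)) (s.filter (fun a => a = l)) := by
      rw [Finset.disjoint_left]
      intro a ha1 ha2
      rw [Finset.mem_filter] at ha1 ha2
      omega
    rw [hsplit, Finset.card_union_of_disjoint hdisj]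
    have : s.filter (fun a => a = l) = if l ∈ s then {l} else ∅ := Finset.filter_eq' s l
    rw [this]
    split_ifs <;> simp
  have hjump : ∀ l, c (l+1) - c l = (if l ∈ m then 1 else 0) - (if l ∈ n then 1 else 0) := by
    intro l
    have kn := key n l
    have km := key m l
    simp only [hc]
    rw [kn, km]
    ring
  -- step A : |c l| ≤ d
  have hbd : ∀ a b : ℕ,
      (((n ∩ Finset.Icc a b).card : ℤ) - ((m ∩ Finset.Icc a b).card : ℤ)).natAbs ≤ k := by
    intro a b
    have h1 : (n ∩ Finset.Icc a b).card ≤ k :=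
      le_trans (Finset.card_le_card Finset.inter_subset_left) hn.le
    have h2 : (m ∩ Finset.Icc a b).card ≤ k :=
      le_trans (Finset.card_le_card Finset.inter_subset_left) hm.le
    omega
  have hcd : ∀ l, (c l).natAbs ≤ d := by
    intro l
    have hfe : ∀ s : Finset ℕ, (∀ a ∈ s, a ≤ R) →
        s.filter (fun a => l ≤ a) = s ∩ Finset.Icc l R := by
      intro s hs
      ext a
      simp only [Finset.mem_filter, Finset.mem_inter, Finset.mem_Icc]
      constructor
      · rintro ⟨h1, h2⟩
        exact ⟨h1, h2, hs a h1⟩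
      · rintro ⟨h1, h2, _⟩
        exact ⟨h1, h2⟩
    have hceq : (c l).natAbs
        = (((n ∩ Finset.Icc l R).card : ℤ) - ((m ∩ Finset.Icc l R).card : ℤ)).natAbs := by
      simp only [hc]
      rw [hfe n (fun a ha => hR a (Finset.mem_union_left _ ha)),
        hfe m (fun a ha => hR a (Finset.mem_union_right _ ha))]
    rw [hceq, hd, dseg]
    have step1 : (((n ∩ Finset.Icc l R).card : ℤ) - ((m ∩ Finset.Icc l R).card : ℤ)).natAbs
        ≤ ⨆ b : ℕ, (((n ∩ Finset.Icc l b).card : ℤ) - ((m ∩ Finset.Icc l b).card : ℤ)).natAbs :=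
      le_ciSup ⟨k, by rintro _ ⟨b, rfl⟩; exact hbd l b⟩ R
    refine le_trans step1 ?_
    exact le_ciSup (f := fun a => ⨆ b : ℕ,
        (((n ∩ Finset.Icc a b).card : ℤ) - ((m ∩ Finset.Icc a b).card : ℤ)).natAbs)
      ⟨k, by rintro _ ⟨a, rfl⟩; exact ciSup_le (fun b => hbd a b)⟩ l
  -- level identity
  have hlevel : ∀ l, ((c l : ℤ) : ℝ)
      = ∑ h ∈ Finset.Icc 1 d, ((if (h:ℤ) ≤ c l then (1:ℝ) else 0) - (if c l ≤ -(h:ℤ) then 1 else 0)) := by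
    intro l
    rw [level_sum d (c l)]
    congr 1
    have := hcd l
    omega
  -- the main sum
  set T : ℕ → ℝ := fun h =>
    ∑ l ∈ (Finset.range (R+1)).filter (fun l => (h:ℤ) ≤ c l), x (trunc σ l)
      - ∑ l ∈ (Finset.range (R+1)).filter (fun l => c l ≤ -(h:ℤ)), x (trunc σ l) with hT
  have hsum : ∑ l ∈ Finset.range (R+1), ((c l : ℤ) : ℝ) * x (trunc σ l)
      = ∑ h ∈ Finset.Icc 1 d, T h := by
    calc ∑ l ∈ Finset.range (R+1), ((c l : ℤ) : ℝ) * x (trunc σ l)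
        = ∑ l ∈ Finset.range (R+1), ∑ h ∈ Finset.Icc 1 d,
            ((if (h:ℤ) ≤ c l then (1:ℝ) else 0) - (if c l ≤ -(h:ℤ) then 1 else 0)) * x (trunc σ l) := by
          refine Finset.sum_congr rfl (fun l _ => ?_)
          rw [← Finset.sum_mul, ← hlevel l]
      _ = ∑ h ∈ Finset.Icc 1 d, ∑ l ∈ Finset.range (R+1),
            ((if (h:ℤ) ≤ c l then (1:ℝ) else 0) - (if c l ≤ -(h:ℤ) then 1 else 0)) * x (trunc σ l) :=
          Finset.sum_comm
      _ = ∑ h ∈ Finset.Icc 1 d, T h := by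
          refine Finset.sum_congr rfl (fun h _ => ?_)
          rw [hT]
          simp only [sub_mul, ite_mul, one_mul, zero_mul]
          rw [Finset.sum_sub_distrib, Finset.sum_filter, Finset.sum_filter]
  -- per-level marker sets
  have hper : ∀ h : ℕ, ∃ M : Finset ℕ, M ⊆ m \ n ∧
      (∀ e ∈ M, c e = ((h+1 : ℕ):ℤ) - 1 ∨ c e = -((h+1 : ℕ):ℤ)) ∧
      |∑ l ∈ (Finset.range (R+1)).filter (fun l => ((h+1 : ℕ):ℤ) ≤ c l), x (trunc σ l)
        - ∑ l ∈ (Finset.range (R+1)).filter (fun l => c l ≤ -((h+1 : ℕ):ℤ)), x (trunc σ l)|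
        ≤ Real.sqrt (M.card) :=
    fun h => per_level σ x hx hx1 R c n m hc0 hcR hjump (h+1) (by omega)
  choose M hM1 hM2 hM3 using hper
  have hThbound : ∀ h ∈ Finset.Icc 1 d, |T h| ≤ Real.sqrt ((M (h-1)).card) := by
    intro h hh
    rw [Finset.mem_Icc] at hh
    have := hM3 (h-1)
    rw [show h - 1 + 1 = h from by omega] at this
    rw [hT]
    exact this
  have hMval : ∀ h ∈ Finset.Icc 1 d, ∀ e ∈ M (h-1), c e = (h:ℤ) - 1 ∨ c e = -(h:ℤ) := by
    intro h hh e he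
    rw [Finset.mem_Icc] at hh
    have := hM2 (h-1) e he
    rwa [show h - 1 + 1 = h from by omega] at this
  have hMdisj : ∀ h1 ∈ Finset.Icc 1 d, ∀ h2 ∈ Finset.Icc 1 d, h1 ≠ h2 →
      Disjoint (M (h1-1)) (M (h2-1)) := by
    intro h1 hh1 h2 hh2 hne
    rw [Finset.disjoint_left]
    intro e he1 he2
    have v1 := hMval h1 hh1 e he1
    have v2 := hMval h2 hh2 e he2
    rw [Finset.mem_Icc] at hh1 hh2
    have : (h1:ℤ) ≠ (h2:ℤ) := by exact_mod_cast hne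
    omega
  have hcount : ∑ h ∈ Finset.Icc 1 d, ((M (h-1)).card) ≤ k := by
    rw [← Finset.card_biUnion hMdisj]
    calc ((Finset.Icc 1 d).biUnion (fun h => M (h-1))).card ≤ (m \ n).card := by
          apply Finset.card_le_card
          intro e he
          obtain ⟨h, hh, he'⟩ := Finset.mem_biUnion.mp he
          exact hM1 (h-1) he'
      _ ≤ m.card := Finset.card_le_card (Finset.sdiff_subset)
      _ = k := hm
  -- Cauchy-Schwarz over levels
  have habs : |∑ l ∈ Finset.range (R+1), ((c l : ℤ) : ℝ) * x (trunc σ l)|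
      ≤ Real.sqrt d * Real.sqrt k := by
    rw [hsum]
    have step1 : |∑ h ∈ Finset.Icc 1 d, T h| ≤ ∑ h ∈ Finset.Icc 1 d, Real.sqrt ((M (h-1)).card) :=
      le_trans (Finset.abs_sum_le_sum_abs _ _) (Finset.sum_le_sum hThbound)
    refine le_trans step1 ?_
    set S := ∑ h ∈ Finset.Icc 1 d, Real.sqrt ((M (h-1)).card) with hS
    have hSnn : 0 ≤ S := Finset.sum_nonneg (fun h _ => Real.sqrt_nonneg _)
    have hCS := Finset.sum_mul_sq_le_sq_mul_sq (Finset.Icc 1 d) (fun _ => (1:ℝ))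
      (fun h => Real.sqrt ((M (h-1)).card))
    simp only [one_mul, one_pow] at hCS
    have hcard : ∑ _h ∈ Finset.Icc 1 d, (1:ℝ) = d := by
      rw [Finset.sum_const, nsmul_eq_mul, mul_one, Nat.card_Icc]
      norm_num
    have hsq : ∑ h ∈ Finset.Icc 1 d, Real.sqrt ((M (h-1)).card) ^ 2
        = ∑ h ∈ Finset.Icc 1 d, (((M (h-1)).card : ℝ)) := by
      refine Finset.sum_congr rfl (fun h _ => ?_)
      rw [Real.sq_sqrt (Nat.cast_nonneg _)]
    have hsum2 : ∑ h ∈ Finset.Icc 1 d, (((M (h-1)).card : ℝ)) ≤ k := by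
      rw [← Nat.cast_sum]
      exact_mod_cast hcount
    have hS2 : S ^ 2 ≤ (d : ℝ) * k := by
      rw [hS]
      calc (∑ h ∈ Finset.Icc 1 d, Real.sqrt ((M (h-1)).card)) ^ 2
          ≤ (∑ _h ∈ Finset.Icc 1 d, (1:ℝ)) * ∑ h ∈ Finset.Icc 1 d, Real.sqrt ((M (h-1)).card) ^ 2 := hCS
        _ ≤ (d : ℝ) * k := by
            rw [hcard, hsq]
            exact mul_le_mul_of_nonneg_left hsum2 (by positivity)
    calc S = Real.sqrt (S ^ 2) := (Real.sqrt_sq hSnn).symm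
      _ ≤ Real.sqrt ((d:ℝ) * k) := Real.sqrt_le_sqrt hS2
      _ = Real.sqrt d * Real.sqrt k := Real.sqrt_mul (by positivity) _
  -- conclude
  have hpd : pairDiff σ k n m R x
      = (1 / Real.sqrt k) * ∑ l ∈ Finset.range (R+1), ((c l : ℤ) : ℝ) * x (trunc σ l) := by
    rw [pairDiff]
    congr 1
    refine Finset.sum_congr rfl (fun l _ => ?_)
    congr 1
    simp only [hc]
    push_cast
    ring
  have hkpos : (0:ℝ) < Real.sqrt k := Real.sqrt_pos.mpr (by exact_mod_cast hk)
  have hfinal : |pairDiff σ k n m R x| ≤ Real.sqrt d := by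
    rw [hpd, abs_mul, abs_of_pos (by positivity : (0:ℝ) < 1 / Real.sqrt k)]
    calc (1 / Real.sqrt k) * |∑ l ∈ Finset.range (R+1), ((c l : ℤ) : ℝ) * x (trunc σ l)|
        ≤ (1 / Real.sqrt k) * (Real.sqrt d * Real.sqrt k) :=
          mul_le_mul_of_nonneg_left habs (by positivity)
      _ = Real.sqrt d := by field_simp
  refine le_trans hfinal ?_
  rcases Nat.eq_zero_or_pos d with h0 | h0
  · rw [h0]; norm_num
  · have h1 : (1:ℝ) ≤ d := by exact_mod_cast h0
    nlinarith [Real.sqrt_nonneg (d:ℝ), Real.mul_self_sqrt (show (0:ℝ) ≤ d by positivity),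
      sq_nonneg (Real.sqrt (d:ℝ) - 1)]
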